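/- For any vector Ψ in the probability simplex on D coordinates (Ψ_d ≥ 0, ∑ Ψ_d = 1) and any δ > 0, the surrogate sparsity measure satisfies 1 ≤ ∑_{d=1}^D (1/δ) ln(1 + (e^δ − 1) Ψ_d) ≤ ‖Ψ‖_0, where ‖Ψ‖_0 is the number of nonzero coordinates of Ψ. -/

import Mathlib

lemma exp_convex_aux (δ x : ℝ) (hx0 : 0 ≤ x) (hx1 : x ≤ 1) :
    Real.exp (δ * x) ≤ 1 + (Real.exp δ - 1) * x := by
  have h := convexOn_exp.2 (Set.mem_univ (0:ℝ)) (Set.mem_univ δ)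
    (by linarith : (0:ℝ) ≤ 1 - x) hx0 (by ring)
  simp only [smul_eq_mul, mul_zero, zero_add, Real.exp_zero, mul_one] at h
  calc Real.exp (δ * x) = Real.exp (x * δ) := by ring_nf
    _ ≤ (1 - x) * 1 + x * Real.exp δ := by simpa using h
    _ = 1 + (Real.exp δ - 1) * x := by ring

/-- For any `Ψ` in the probability simplex on `D` coordinates and any `δ > 0`,
`1 ≤ ∑_d (1/δ) ln(1 + (e^δ − 1) Ψ_d) ≤ ‖Ψ‖₀`. -/
theorem surrogate_between_one_and_l0 (D : ℕ) (hD : 0 < D) (δ : ℝ) (hδ : 0 < δ)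
    (Ψ : Fin D → ℝ) (hnn : ∀ d, 0 ≤ Ψ d) (hsum : ∑ d, Ψ d = 1) :
    1 ≤ ∑ d, δ⁻¹ * Real.log (1 + (Real.exp δ - 1) * Ψ d) ∧
    ∑ d, δ⁻¹ * Real.log (1 + (Real.exp δ - 1) * Ψ d) ≤
      ((Finset.univ.filter (fun d => Ψ d ≠ 0)).card : ℝ) := by
  have hub : ∀ d, Ψ d ≤ 1 := by
    intro d
    calc Ψ d ≤ ∑ e, Ψ e := Finset.single_le_sum (fun e _ => hnn e) (Finset.mem_univ d)
      _ = 1 := hsum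
  have hEpos : (0:ℝ) < Real.exp δ - 1 := by
    have := Real.add_one_lt_exp (ne_of_gt hδ)
    linarith
  have hargpos : ∀ d, (0:ℝ) < 1 + (Real.exp δ - 1) * Ψ d := fun d => by
    nlinarith [hnn d, hEpos]
  constructor
  · -- lower bound: each term ≥ Ψ d
    have hterm : ∀ d ∈ Finset.univ, Ψ d ≤ δ⁻¹ * Real.log (1 + (Real.exp δ - 1) * Ψ d) := by
      intro d _
      have h1 : Real.exp (δ * Ψ d) ≤ 1 + (Real.exp δ - 1) * Ψ d :=
        exp_convex_aux δ (Ψ d) (hnn d) (hub d)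
      have h2 : δ * Ψ d ≤ Real.log (1 + (Real.exp δ - 1) * Ψ d) := by
        have := Real.log_le_log (Real.exp_pos _) h1
        rwa [Real.log_exp] at this
      rw [← mul_le_mul_iff_right₀ hδ]
      calc δ * Ψ d ≤ Real.log (1 + (Real.exp δ - 1) * Ψ d) := h2
        _ = δ * (δ⁻¹ * Real.log (1 + (Real.exp δ - 1) * Ψ d)) := by
            field_simp
    calc (1:ℝ) = ∑ d, Ψ d := hsum.symm
      _ ≤ _ := Finset.sum_le_sum hterm
  · -- upper bound
    have hzero : ∀ d ∈ Finset.univ \ Finset.univ.filter (fun d => Ψ d ≠ 0),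
        δ⁻¹ * Real.log (1 + (Real.exp δ - 1) * Ψ d) = 0 := by
      intro d hd
      simp only [Finset.mem_sdiff, Finset.mem_filter, Finset.mem_univ, true_and,
        not_not] at hd
      rw [hd]
      simp
    rw [← Finset.sum_subset (Finset.filter_subset _ _)
      (fun d hd hnd => hzero d (Finset.mem_sdiff.mpr ⟨hd, hnd⟩))]
    calc ∑ d ∈ Finset.univ.filter (fun d => Ψ d ≠ 0),
          δ⁻¹ * Real.log (1 + (Real.exp δ - 1) * Ψ d)
        ≤ ∑ _d ∈ Finset.univ.filter (fun d => Ψ d ≠ 0), (1:ℝ) := by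
          apply Finset.sum_le_sum
          intro d _
          have h1 : 1 + (Real.exp δ - 1) * Ψ d ≤ Real.exp δ := by
            nlinarith [hub d, hEpos]
          have h2 : Real.log (1 + (Real.exp δ - 1) * Ψ d) ≤ δ := by
            have := Real.log_le_log (hargpos d) h1
            rwa [Real.log_exp] at this
          rw [← mul_le_mul_iff_right₀ hδ]
          calc δ * (δ⁻¹ * Real.log (1 + (Real.exp δ - 1) * Ψ d))
              = Real.log (1 + (Real.exp δ - 1) * Ψ d) := by field_simp
            _ ≤ δ := h2
            _ = δ * 1 := (mul_one δ).symm
      _ = ((Finset.univ.filter (fun d => Ψ d ≠ 0)).card : ℝ) := by simp
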